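/- arXiv:2305.09221 — 2 statements merged into one kernel-verified Lean document; each statement's English description precedes it below -/
import Mathlib

section
/- Chameleon hash collision extraction (discrete-log reduction core): with the setup above, if H(x, r) = H(x', r') for some x, x', r, r' ∈ ℤ/q with r ≠ r', then the secret key is recoverable as ξ = (x − x')·(r' − r)⁻¹ mod q. -/
/-- Chameleon hash collision extraction: a collision `H(x,r) = H(x',r')` with
`r ≠ r'` reveals the secret key `ξ = (x − x')·(r' − r)⁻¹`. -/
theorem chameleon_collision_extract (p q : ℕ) [Fact p.Prime] [Fact q.Prime]
    (g : (ZMod p)ˣ) (hg : orderOf g = q)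
    (ξ : ZMod q) (y : (ZMod p)ˣ) (hy : y = g ^ ξ.val)
    (x x' r r' : ZMod q) (hcol : g ^ x.val * y ^ r.val = g ^ x'.val * y ^ r'.val)
    (hne : r ≠ r') :
    ξ = (x - x') * (r' - r)⁻¹ := by
  subst hy
  rw [← pow_mul, ← pow_mul, ← pow_add, ← pow_add, pow_eq_pow_iff_modEq, hg,
    ← ZMod.natCast_eq_natCast_iff] at hcol
  push_cast at hcol
  simp only [ZMod.natCast_val, ZMod.cast_id] at hcol
  have hr : r' - r ≠ 0 := sub_ne_zero.mpr (Ne.symm hne)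
  field_simp
  linear_combination -hcol
end

section
/- Minimal cover size bound for revocation: in a complete binary tree with n = 2^h leaves, if r leaves are revoked (1 ≤ r ≤ n), there exists an exact cover of the remaining n − r leaves by at most r·h subtree roots (in fact at most r·log₂(n/r) + r, but the r·h bound suffices). -/
def GoodCover (h : ℕ) (S R : Finset (List Bool)) : Prop :=
  (∀ d ∈ R, d.length ≤ h) ∧
  (∀ d₁ ∈ R, ∀ d₂ ∈ R, d₁ ≠ d₂ →
    ∀ u : List Bool, u.length = h → ¬ (d₁ <+: u ∧ d₂ <+: u)) ∧
  (∀ u : List Bool, u.length = h → ((∃ d ∈ R, d <+: u) ↔ u ∈ S))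

def allL : ℕ → Finset (List Bool)
  | 0 => {[]}
  | (h+1) => ((allL h).image (List.cons false)) ∪ ((allL h).image (List.cons true))

lemma mem_allL (h : ℕ) (u : List Bool) : u ∈ allL h ↔ u.length = h := by
  induction h generalizing u with
  | zero => simp [allL, List.length_eq_zero_iff]
  | succ h ih =>
    cases u with
    | nil => simp [allL]
    | cons b t =>
      cases b <;> simp [allL, ih]

lemma card_allL (h : ℕ) : (allL h).card = 2 ^ h := by
  induction h with
  | zero => simp [allL]
  | succ h ih =>
    have hdisj : Disjoint ((allL h).image (List.cons false)) ((allL h).image (List.cons true)) := by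
      simp only [Finset.disjoint_left, Finset.mem_image]
      rintro a ⟨x, -, rfl⟩ ⟨y, -, hy⟩
      simp at hy
    rw [allL, Finset.card_union_of_disjoint hdisj,
      Finset.card_image_of_injective _ (List.cons_injective),
      Finset.card_image_of_injective _ (List.cons_injective), ih]
    ring

lemma glue {h : ℕ} {S₀ S₁ R₀ R₁ S : Finset (List Bool)}
    (h0 : ∀ t, (false :: t) ∈ S ↔ t ∈ S₀)
    (h1 : ∀ t, (true :: t) ∈ S ↔ t ∈ S₁)
    (g0 : GoodCover h S₀ R₀) (g1 : GoodCover h S₁ R₁) :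
    GoodCover (h+1) S (R₀.image (List.cons false) ∪ R₁.image (List.cons true)) := by
  obtain ⟨len0, dis0, cov0⟩ := g0
  obtain ⟨len1, dis1, cov1⟩ := g1
  refine ⟨?_, ?_, ?_⟩
  · intro d hd
    simp only [Finset.mem_union, Finset.mem_image] at hd
    rcases hd with ⟨e, he, rfl⟩ | ⟨e, he, rfl⟩
    · simpa using Nat.succ_le_succ (len0 e he)
    · simpa using Nat.succ_le_succ (len1 e he)
  · intro d₁ hd₁ d₂ hd₂ hne u hu ⟨hp₁, hp₂⟩
    cases u with
    | nil => simp at hu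
    | cons b t =>
      simp only [List.length_cons, Nat.succ.injEq] at hu
      simp only [Finset.mem_union, Finset.mem_image] at hd₁ hd₂
      rcases hd₁ with ⟨e₁, he₁, rfl⟩ | ⟨e₁, he₁, rfl⟩ <;>
        rcases hd₂ with ⟨e₂, he₂, rfl⟩ | ⟨e₂, he₂, rfl⟩ <;>
        rw [List.cons_prefix_cons] at hp₁ hp₂ <;>
        obtain ⟨hb₁, hp₁⟩ := hp₁ <;> obtain ⟨hb₂, hp₂⟩ := hp₂
      · exact dis0 e₁ he₁ e₂ he₂ (fun hh => hne (by rw [hh])) t hu ⟨hp₁, hp₂⟩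
      · rw [← hb₁] at hb₂; exact absurd hb₂ (by simp)
      · rw [← hb₁] at hb₂; exact absurd hb₂ (by simp)
      · exact dis1 e₁ he₁ e₂ he₂ (fun hh => hne (by rw [hh])) t hu ⟨hp₁, hp₂⟩
  · intro u hu
    cases u with
    | nil => simp at hu
    | cons b t =>
      simp only [List.length_cons, Nat.succ.injEq] at hu
      constructor
      · rintro ⟨d, hd, hp⟩
        simp only [Finset.mem_union, Finset.mem_image] at hd
        rcases hd with ⟨e, he, rfl⟩ | ⟨e, he, rfl⟩ <;>
          rw [List.cons_prefix_cons] at hp <;> obtain ⟨hb, hp⟩ := hp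
        · subst hb; exact (h0 t).mpr ((cov0 t hu).mp ⟨e, he, hp⟩)
        · subst hb; exact (h1 t).mpr ((cov1 t hu).mp ⟨e, he, hp⟩)
      · intro hmem
        cases b with
        | false =>
          obtain ⟨e, he, hp⟩ := (cov0 t hu).mpr ((h0 t).mp hmem)
          exact ⟨false :: e, Finset.mem_union_left _ (Finset.mem_image_of_mem _ he),
            List.cons_prefix_cons.mpr ⟨rfl, hp⟩⟩
        | true =>
          obtain ⟨e, he, hp⟩ := (cov1 t hu).mpr ((h1 t).mp hmem)
          exact ⟨true :: e, Finset.mem_union_right _ (Finset.mem_image_of_mem _ he),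
            List.cons_prefix_cons.mpr ⟨rfl, hp⟩⟩

lemma good_full (h : ℕ) : GoodCover h (allL h) {[]} := by
  refine ⟨by simp, ?_, ?_⟩
  · intro d₁ hd₁ d₂ hd₂ hne
    simp only [Finset.mem_singleton] at hd₁ hd₂
    exact absurd (hd₁.trans hd₂.symm) hne
  · intro u hu
    simp [mem_allL, hu]

lemma good_empty (h : ℕ) : GoodCover h ∅ ∅ := by
  refine ⟨by simp, by simp, by simp⟩

lemma aux_cover : ∀ h : ℕ, ∀ S : Finset (List Bool),
    (∀ u ∈ S, u.length = h) → S.card < 2 ^ h →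
    ∃ R : Finset (List Bool), GoodCover h S R ∧ R.card ≤ (2 ^ h - S.card) * h := by
  intro h
  induction h with
  | zero =>
    intro S hS hcard
    have : S = ∅ := Finset.card_eq_zero.mp (by omega)
    subst this
    exact ⟨∅, good_empty 0, by simp⟩
  | succ h ih =>
    intro S hS hcard
    set S₀ := S.preimage (List.cons false) (List.cons_injective.injOn) with hS₀def
    set S₁ := S.preimage (List.cons true) (List.cons_injective.injOn) with hS₁def
    have h0 : ∀ t, (false :: t) ∈ S ↔ t ∈ S₀ := fun t => (Finset.mem_preimage).symm
    have h1 : ∀ t, (true :: t) ∈ S ↔ t ∈ S₁ := fun t => (Finset.mem_preimage).symm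
    have hlen0 : ∀ t ∈ S₀, t.length = h := by
      intro t ht
      have := hS _ ((h0 t).mpr ht); simpa using this
    have hlen1 : ∀ t ∈ S₁, t.length = h := by
      intro t ht
      have := hS _ ((h1 t).mpr ht); simpa using this
    have hsplit : S = S₀.image (List.cons false) ∪ S₁.image (List.cons true) := by
      ext u
      simp only [Finset.mem_union, Finset.mem_image]
      constructor
      · intro hu
        have hl := hS u hu
        cases u with
        | nil => simp at hl
        | cons b t =>
          cases b with
          | false => exact Or.inl ⟨t, (h0 t).mp hu, rfl⟩
          | true => exact Or.inr ⟨t, (h1 t).mp hu, rfl⟩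
      · rintro (⟨t, ht, rfl⟩ | ⟨t, ht, rfl⟩)
        · exact (h0 t).mpr ht
        · exact (h1 t).mpr ht
    have hdisj : Disjoint (S₀.image (List.cons false)) (S₁.image (List.cons true)) := by
      simp only [Finset.disjoint_left, Finset.mem_image]
      rintro a ⟨x, -, rfl⟩ ⟨y, -, hy⟩
      simp at hy
    have hcardsum : S.card = S₀.card + S₁.card := by
      rw [hsplit, Finset.card_union_of_disjoint hdisj,
        Finset.card_image_of_injective _ (List.cons_injective),
        Finset.card_image_of_injective _ (List.cons_injective)]
    have hle0 : S₀.card ≤ 2 ^ h := by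
      have : S₀ ⊆ allL h := fun t ht => (mem_allL h t).mpr (hlen0 t ht)
      calc S₀.card ≤ (allL h).card := Finset.card_le_card this
        _ = 2 ^ h := card_allL h
    have hle1 : S₁.card ≤ 2 ^ h := by
      have : S₁ ⊆ allL h := fun t ht => (mem_allL h t).mpr (hlen1 t ht)
      calc S₁.card ≤ (allL h).card := Finset.card_le_card this
        _ = 2 ^ h := card_allL h
    have hpow : 2 ^ (h + 1) = 2 ^ h + 2 ^ h := by ring
    by_cases hc0 : S₀.card < 2 ^ h
    · by_cases hc1 : S₁.card < 2 ^ h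
      · -- both strict
        obtain ⟨R₀, g0, b0⟩ := ih S₀ hlen0 hc0
        obtain ⟨R₁, g1, b1⟩ := ih S₁ hlen1 hc1
        refine ⟨R₀.image (List.cons false) ∪ R₁.image (List.cons true),
          glue h0 h1 g0 g1, ?_⟩
        have : (R₀.image (List.cons false) ∪ R₁.image (List.cons true)).card
            ≤ R₀.card + R₁.card := by
          calc _ ≤ (R₀.image (List.cons false)).card + (R₁.image (List.cons true)).card :=
              Finset.card_union_le _ _
            _ ≤ R₀.card + R₁.card :=
              Nat.add_le_add Finset.card_image_le Finset.card_image_le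
        have harith : (2 ^ h - S₀.card) * h + (2 ^ h - S₁.card) * h
            ≤ (2 ^ (h+1) - S.card) * (h+1) := by
          have : (2 ^ h - S₀.card) + (2 ^ h - S₁.card) = 2 ^ (h+1) - S.card := by omega
          calc (2 ^ h - S₀.card) * h + (2 ^ h - S₁.card) * h
              = ((2 ^ h - S₀.card) + (2 ^ h - S₁.card)) * h := by ring
            _ = (2 ^ (h+1) - S.card) * h := by rw [this]
            _ ≤ (2 ^ (h+1) - S.card) * (h+1) := Nat.mul_le_mul_left _ (by omega)
        omega
      · -- S₁ full
        have hc1' : S₁.card = 2 ^ h := by omega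
        have hS1full : S₁ = allL h := by
          apply Finset.eq_of_subset_of_card_le
          · exact fun t ht => (mem_allL h t).mpr (hlen1 t ht)
          · rw [card_allL, hc1']
        have hc0' : S₀.card < 2 ^ h := hc0
        obtain ⟨R₀, g0, b0⟩ := ih S₀ hlen0 hc0'
        have g1 : GoodCover h S₁ {[]} := by rw [hS1full]; exact good_full h
        refine ⟨R₀.image (List.cons false) ∪ ({[]} : Finset (List Bool)).image (List.cons true),
          glue h0 h1 g0 g1, ?_⟩
        have hcardle : (R₀.image (List.cons false) ∪
            ({[]} : Finset (List Bool)).image (List.cons true)).card ≤ R₀.card + 1 := by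
          calc _ ≤ (R₀.image (List.cons false)).card
                + (({[]} : Finset (List Bool)).image (List.cons true)).card :=
              Finset.card_union_le _ _
            _ ≤ R₀.card + 1 :=
              Nat.add_le_add Finset.card_image_le (by simp)
        have hr : 2 ^ (h+1) - S.card = 2 ^ h - S₀.card := by omega
        have hr1 : 1 ≤ 2 ^ h - S₀.card := by omega
        have h2 : (2 ^ h - S₀.card) * h + 1 ≤ (2 ^ h - S₀.card) * (h + 1) := by
          nlinarith
        have h3 : (2 ^ (h+1) - S.card) * (h+1) = (2 ^ h - S₀.card) * (h+1) := by rw [hr]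
        omega
    · -- S₀ full
      have hc0' : S₀.card = 2 ^ h := by omega
      have hS0full : S₀ = allL h := by
        apply Finset.eq_of_subset_of_card_le
        · exact fun t ht => (mem_allL h t).mpr (hlen0 t ht)
        · rw [card_allL, hc0']
      have hc1 : S₁.card < 2 ^ h := by omega
      obtain ⟨R₁, g1, b1⟩ := ih S₁ hlen1 hc1
      have g0 : GoodCover h S₀ {[]} := by rw [hS0full]; exact good_full h
      refine ⟨({[]} : Finset (List Bool)).image (List.cons false) ∪ R₁.image (List.cons true),
        glue h0 h1 g0 g1, ?_⟩
      have hcardle : (({[]} : Finset (List Bool)).image (List.cons false) ∪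
          R₁.image (List.cons true)).card ≤ 1 + R₁.card := by
        calc _ ≤ (({[]} : Finset (List Bool)).image (List.cons false)).card
              + (R₁.image (List.cons true)).card :=
            Finset.card_union_le _ _
          _ ≤ 1 + R₁.card :=
            Nat.add_le_add (by simp) Finset.card_image_le
      have hr : 2 ^ (h+1) - S.card = 2 ^ h - S₁.card := by omega
      have hr1 : 1 ≤ 2 ^ h - S₁.card := by omega
      have h2 : (2 ^ h - S₁.card) * h + 1 ≤ (2 ^ h - S₁.card) * (h + 1) := by
        nlinarith
      have h3 : (2 ^ (h+1) - S.card) * (h+1) = (2 ^ h - S₁.card) * (h+1) := by rw [hr]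
      omega

/-- Minimal cover size bound for revocation: in the complete binary tree with
`n = 2^h` leaves, if `r = n − |S| ≥ 1` leaves are revoked, the remaining leaf
set `S` admits an exact cover by at most `r·h` subtree roots. -/
theorem revocation_cover_bound (h : ℕ) (S : Finset (List Bool))
    (hS : ∀ u ∈ S, u.length = h) (r : ℕ) (hr : r = 2 ^ h - S.card)
    (hr1 : 1 ≤ r) :
    ∃ R : Finset (List Bool),
      (∀ d ∈ R, d.length ≤ h) ∧
      (∀ d₁ ∈ R, ∀ d₂ ∈ R, d₁ ≠ d₂ →
        ∀ u : List Bool, u.length = h → ¬ (d₁ <+: u ∧ d₂ <+: u)) ∧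
      (∀ u : List Bool, u.length = h → ((∃ d ∈ R, d <+: u) ↔ u ∈ S)) ∧
      R.card ≤ r * h := by
  have hlt : S.card < 2 ^ h := by omega
  obtain ⟨R, ⟨g1, g2, g3⟩, gb⟩ := aux_cover h S hS hlt
  exact ⟨R, g1, g2, g3, by rw [hr]; exact gb⟩
end
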